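/- Let K be a field of characteristic zero, S = K[X_0,X_1], and F = Π_{i=1}^s (X_1 - a_i X_0)^{m_i} with distinct a_1,...,a_s ∈ K. Write G = Π_{i=1}^s (X_1 - a_i X_0)^{m_i - 1}, H_1 = Σ_i m_i a_i Π_{j≠i}(X_1 - a_j X_0), H_2 = Σ_i m_i Π_{j≠i}(X_1 - a_j X_0). Then gcd(H_1, H_2) = 1, so {H_1, H_2} is a regular sequence in S. -/

import Mathlib

open MvPolynomial

lemma prime_lin (K : Type) [Field K] (c : K) :
    Prime (X 1 - C c * X 0 : MvPolynomial (Fin 2) K) := by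
  let e : MvPolynomial (Fin 2) K ≃+* Polynomial (MvPolynomial (Fin 1) K) :=
    ((renameEquiv K (Equiv.swap (0 : Fin 2) 1)).trans (finSuccEquiv K 1)).toRingEquiv
  have he : e (X 1 - C c * X 0) = Polynomial.X - Polynomial.C (C c * X 0) := by
    simp only [e, map_sub, map_mul, AlgEquiv.toRingEquiv_eq_coe, AlgEquiv.coe_ringEquiv,
      AlgEquiv.trans_apply, renameEquiv_apply, rename_X, rename_C]
    rw [show (Equiv.swap (0 : Fin 2) 1) 1 = 0 from rfl,
      show (Equiv.swap (0 : Fin 2) 1) 0 = 1 from rfl,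
      show (1 : Fin 2) = Fin.succ 0 from rfl]
    rw [finSuccEquiv_X_zero, finSuccEquiv_X_succ]
    simp [finSuccEquiv_apply]
  rw [← MulEquiv.prime_iff e.toMulEquiv]
  have : (e.toMulEquiv : MvPolynomial (Fin 2) K → _) = e := rfl
  rw [this, he]
  exact Polynomial.prime_X_sub_C _

/-- Let `K` be a field of characteristic zero, `S = K[X_0, X_1]`, and
`F = ∏_{i=1}^s (X_1 - a_i X_0)^{m_i}` with distinct `a_1, …, a_s ∈ K` and
`m_i ≥ 1`.  With `H_1 = ∑_i m_i a_i ∏_{j≠i} (X_1 - a_j X_0)` and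
`H_2 = ∑_i m_i ∏_{j≠i} (X_1 - a_j X_0)`, the polynomials `H_1` and `H_2`
share no common non-unit factor, i.e. `gcd(H_1, H_2) = 1`. -/
theorem gcd_H1_H2_eq_one (K : Type) [Field K] [CharZero K] (s : ℕ) (hs : 1 ≤ s)
    (a : Fin s → K) (ha : Function.Injective a)
    (m : Fin s → ℕ) (hm : ∀ i, 1 ≤ m i)
    (H₁ H₂ : MvPolynomial (Fin 2) K)
    (hH₁ : H₁ = ∑ i : Fin s, (m i : MvPolynomial (Fin 2) K) * MvPolynomial.C (a i) *
      ∏ j ∈ Finset.univ.erase i,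
        (MvPolynomial.X 1 - MvPolynomial.C (a j) * MvPolynomial.X 0))
    (hH₂ : H₂ = ∑ i : Fin s, (m i : MvPolynomial (Fin 2) K) *
      ∏ j ∈ Finset.univ.erase i,
        (MvPolynomial.X 1 - MvPolynomial.C (a j) * MvPolynomial.X 0)) :
    IsRelPrime H₁ H₂ := by
  set L : Fin s → MvPolynomial (Fin 2) K := fun i => X 1 - C (a i) * X 0 with hLdef
  have hprime : ∀ i, Prime (L i) := fun i => prime_lin K (a i)
  -- every L i does not divide H₂
  have hnotdvd : ∀ i, ¬ L i ∣ H₂ := by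
    intro i hdvd
    have h1 : L i ∣ ∑ k ∈ Finset.univ.erase i,
        (m k : MvPolynomial (Fin 2) K) * ∏ j ∈ Finset.univ.erase k, L j := by
      refine Finset.dvd_sum fun k hk => Dvd.dvd.mul_left ?_ _
      exact Finset.dvd_prod_of_mem _
        (Finset.mem_erase.mpr ⟨(Finset.ne_of_mem_erase hk).symm, Finset.mem_univ i⟩)
    have h2 : L i ∣ (m i : MvPolynomial (Fin 2) K) * ∏ j ∈ Finset.univ.erase i, L j := by
      rw [hH₂, ← Finset.add_sum_erase _ _ (Finset.mem_univ i)] at hdvd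
      have := dvd_sub hdvd h1
      simpa using this
    have hmiu : IsUnit ((m i : MvPolynomial (Fin 2) K)) := by
      have hne : ((m i : K)) ≠ 0 := Nat.cast_ne_zero.mpr (Nat.one_le_iff_ne_zero.mp (hm i))
      refine IsUnit.of_mul_eq_one (C (m i : K)⁻¹) ?_
      rw [show ((m i : MvPolynomial (Fin 2) K)) = C ((m i : K)) from (map_natCast (C : K →+* MvPolynomial (Fin 2) K) (m i)).symm]
      rw [← map_mul, mul_inv_cancel₀ hne, map_one]
    rcases (hprime i).dvd_or_dvd h2 with h | h
    · exact (hprime i).not_isUnit (isUnit_of_dvd_unit h hmiu)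
    · obtain ⟨j, hj, hdvdj⟩ := (hprime i).exists_mem_finset_dvd h
      obtain ⟨t, ht⟩ := hdvdj
      have := congrArg (eval ![(1 : K), a i]) ht
      simp [hLdef] at this
      exact (Finset.ne_of_mem_erase hj) (ha (sub_eq_zero.mp this)).symm
  -- key identity
  have key : X 1 * H₂ - X 0 * H₁
      = C ((∑ i, m i : ℕ) : K) * ∏ i, L i := by
    rw [hH₁, hH₂, Finset.mul_sum, Finset.mul_sum, ← Finset.sum_sub_distrib]
    rw [show (C ((∑ i, m i : ℕ) : K) : MvPolynomial (Fin 2) K)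
        = ∑ i, C ((m i : K)) by push_cast [map_sum]; ring_nf]
    rw [Finset.sum_mul]
    refine Finset.sum_congr rfl fun i _ => ?_
    rw [← Finset.mul_prod_erase _ _ (Finset.mem_univ i)]
    rw [show ((m i : MvPolynomial (Fin 2) K)) = C ((m i : K)) from (map_natCast (C : K →+* MvPolynomial (Fin 2) K) (m i)).symm]
    ring
  have hMne : ((∑ i, m i : ℕ) : K) ≠ 0 := by
    have hpos : 0 < ∑ i, m i :=
      Finset.sum_pos (fun i _ => hm i) ⟨⟨0, hs⟩, Finset.mem_univ _⟩
    exact Nat.cast_ne_zero.mpr hpos.ne'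
  have hMu : IsUnit (C ((∑ i, m i : ℕ) : K) : MvPolynomial (Fin 2) K) := by
    refine IsUnit.of_mul_eq_one (C ((∑ i, m i : ℕ) : K)⁻¹) ?_
    rw [← map_mul, mul_inv_cancel₀ hMne, map_one]
  intro d hd1 hd2
  by_contra hud
  have hd0 : d ≠ 0 := by
    rintro rfl
    exact hnotdvd ⟨0, hs⟩ ((zero_dvd_iff.mp hd2) ▸ dvd_zero _)
  obtain ⟨q, hqirr, hqd⟩ := WfDvdMonoid.exists_irreducible_factor hud hd0
  have hq : Prime q := hqirr.prime
  have hq2 : q ∣ H₂ := hqd.trans hd2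
  have hqP : q ∣ C ((∑ i, m i : ℕ) : K) * ∏ i, L i := by
    rw [← key]
    exact dvd_sub (Dvd.dvd.mul_left hq2 _) (Dvd.dvd.mul_left (hqd.trans hd1) _)
  have hqprod : q ∣ ∏ i, L i := by
    rcases hq.dvd_or_dvd hqP with h | h
    · exact absurd (isUnit_of_dvd_unit h hMu) hq.not_isUnit
    · exact h
  obtain ⟨i, _, hqi⟩ := hq.exists_mem_finset_dvd hqprod
  obtain ⟨r, hr⟩ := hqi
  rcases (hprime i).irreducible.isUnit_or_isUnit hr with h | h
  · exact hq.not_isUnit h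
  · obtain ⟨u, rfl⟩ := h
    have : L i ∣ q := ⟨(↑u⁻¹ : _), by rw [hr, mul_assoc, Units.mul_inv, mul_one]⟩
    exact hnotdvd i (this.trans hq2)
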